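/- Let σ : ℝ³ → ℝ³ satisfy σ(u)·u ≥ ρ₂|u|² + ρ_r|u|^r with ρ₂, ρ_r > 0 and monotonicity (σ(u)−σ(w))·(u−w) ≥ 0. Then ∫₀¹ σ(λu)·u dλ ≥ 2^{−2} ρ₂ |u|² + 2^{−r} ρ_r |u|^r for every u ∈ ℝ³. -/

import Mathlib

open MeasureTheory

/-- Lower bound for the boundary dissipation potential: if `σ : ℝ³ → ℝ³` is continuous,
monotone and coercive (`σ(u)·u ≥ ρ₂|u|² + ρ_r|u|^r`), then
`∫₀¹ σ(λu)·u dλ ≥ 2⁻²ρ₂|u|² + 2⁻ʳρ_r|u|^r` for every `u ∈ ℝ³`. -/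
theorem boundary_potential_lower_bound
    (σ : EuclideanSpace ℝ (Fin 3) → EuclideanSpace ℝ (Fin 3))
    (ρ₂ ρr r : ℝ) (hρ₂ : 0 < ρ₂) (hρr : 0 < ρr) (hr : 1 < r)
    (hσ : Continuous σ)
    (hmono : ∀ u w : EuclideanSpace ℝ (Fin 3), 0 ≤ (inner ℝ (σ u - σ w) (u - w) : ℝ))
    (hcoer : ∀ u : EuclideanSpace ℝ (Fin 3),
      ρ₂ * ‖u‖ ^ 2 + ρr * ‖u‖ ^ r ≤ (inner ℝ (σ u) u : ℝ)) :
    ∀ u : EuclideanSpace ℝ (Fin 3),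
      (2 : ℝ) ^ (-2 : ℝ) * ρ₂ * ‖u‖ ^ 2 + (2 : ℝ) ^ (-r) * ρr * ‖u‖ ^ r
        ≤ ∫ l in (0 : ℝ)..1, (inner ℝ (σ (l • u)) u : ℝ) := by
  intro u
  set f : ℝ → ℝ := fun l => (inner ℝ (σ (l • u)) u : ℝ) with hf
  have hfc : Continuous f := by
    exact Continuous.inner (hσ.comp (continuous_id.smul continuous_const)) continuous_const
  -- monotone
  have hmonof : ∀ a b : ℝ, a ≤ b → f a ≤ f b := by
    intro a b hab
    rcases eq_or_lt_of_le hab with h | h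
    · simp [h]
    · have h0 := hmono (b • u) (a • u)
      have key : (inner ℝ (σ (b • u) - σ (a • u)) (b • u - a • u) : ℝ)
          = (b - a) * (f b - f a) := by
        rw [← sub_smul, inner_smul_right, inner_sub_left]
      rw [key] at h0
      have := (mul_nonneg_iff_of_pos_left (sub_pos.2 h)).1 h0
      linarith
  -- nonneg for l > 0
  have hpos : ∀ l : ℝ, 0 < l → 0 ≤ f l := by
    intro l hl
    have h1 : 0 ≤ (inner ℝ (σ (l • u)) (l • u) : ℝ) := by
      refine le_trans ?_ (hcoer (l • u))
      positivity
    rw [inner_smul_right] at h1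
    exact nonneg_of_mul_nonneg_right h1 hl
  have h0 : 0 ≤ f 0 := by
    have ht : Filter.Tendsto f (nhdsWithin 0 (Set.Ioi 0)) (nhds (f 0)) :=
      (hfc.continuousAt.tendsto).mono_left nhdsWithin_le_nhds
    refine ge_of_tendsto ht ?_
    filter_upwards [self_mem_nhdsWithin] with x hx using hpos x hx
  have hnonneg : ∀ l : ℝ, 0 ≤ l → 0 ≤ f l := by
    intro l hl
    rcases eq_or_lt_of_le hl with h | h
    · simpa [← h] using h0
    · exact hpos l h
  have hint : ∀ a b : ℝ, IntervalIntegrable f volume a b :=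
    fun a b => hfc.intervalIntegrable a b
  -- split
  have hsplit : ∫ l in (0:ℝ)..1, f l
      = (∫ l in (0:ℝ)..(1/2), f l) + ∫ l in (1/2:ℝ)..1, f l :=
    (intervalIntegral.integral_add_adjacent_intervals (hint 0 (1/2)) (hint (1/2) 1)).symm
  have h1 : 0 ≤ ∫ l in (0:ℝ)..(1/2), f l := by
    refine intervalIntegral.integral_nonneg (by norm_num) ?_
    intro x hx; exact hnonneg x hx.1
  have h2 : (1/2 : ℝ) * f (1/2) ≤ ∫ l in (1/2:ℝ)..1, f l := by
    have := intervalIntegral.integral_mono_on (by norm_num : (1/2:ℝ) ≤ 1)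
      (intervalIntegrable_const (c := f (1/2))) (hint (1/2) 1)
      (fun x hx => hmonof _ _ hx.1)
    rw [intervalIntegral.integral_const, smul_eq_mul] at this
    norm_num at this ⊢
    linarith
  -- value at 1/2
  set v : EuclideanSpace ℝ (Fin 3) := (1/2 : ℝ) • u with hv
  have hfv : f (1/2) = 2 * (inner ℝ (σ v) v : ℝ) := by
    rw [hv, inner_smul_right]; ring
  have hnv : ‖v‖ = ‖u‖ / 2 := by
    rw [hv, norm_smul]; simp [abs_of_nonneg]; ring
  have hc := hcoer v
  rw [hnv] at hc
  have hfin : (2:ℝ) ^ (-2:ℝ) * ρ₂ * ‖u‖ ^ 2 + (2:ℝ) ^ (-r) * ρr * ‖u‖ ^ r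
      ≤ (1/2 : ℝ) * f (1/2) := by
    rw [hfv]
    have e1 : (2:ℝ) ^ (-2:ℝ) = (1/4 : ℝ) := by
      rw [show (-2:ℝ) = ((-2 : ℤ) : ℝ) by norm_num, Real.rpow_intCast]; norm_num
    have e2 : (‖u‖ / 2) ^ r = ‖u‖ ^ r * (2:ℝ) ^ (-r) := by
      rw [div_eq_mul_inv, Real.mul_rpow (norm_nonneg u) (by norm_num),
        Real.rpow_neg (by norm_num : (0:ℝ) ≤ 2), ← Real.inv_rpow (by norm_num : (0:ℝ) ≤ 2)]
    have e3 : (‖u‖ / 2) ^ 2 = ‖u‖ ^ 2 / 4 := by ring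
    rw [e1]
    rw [e3, e2] at hc
    nlinarith [hc]
  calc (2:ℝ) ^ (-2:ℝ) * ρ₂ * ‖u‖ ^ 2 + (2:ℝ) ^ (-r) * ρr * ‖u‖ ^ r
      ≤ (1/2 : ℝ) * f (1/2) := hfin
    _ ≤ ∫ l in (1/2:ℝ)..1, f l := h2
    _ ≤ ∫ l in (0:ℝ)..1, f l := by rw [hsplit]; linarith
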